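/- For m ≥ 3 and n ≥ 1, the number of Type I(b) tandem occurrences in the Fibonacci array f_{m,n}, i.e. the number of tuples (i,j,r,l) with r,l ≥ 1, i+2r ≤ F(m), j+l ≤ F(n) such that f_{m,n}[(i,j);(r,l)] = f_{m,n}[(i+r,j);(r,l)], equals R(m) · F(n)(F(n)+1)/2, where R(m) is the number of square occurrences in the 1D Fibonacci word f_m. -/
import Mathlib


/-- Fibonacci numbers: F(0)=1, F(1)=1, F(n+2)=F(n+1)+F(n). -/
def F : ℕ → ℕ
  | 0 => 1
  | 1 => 1
  | n + 2 => F (n + 1) + F n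

/-- Finite Fibonacci words over {a,b} coded as Fin 2 (a=0, b=1). -/
def fibWord : ℕ → List (Fin 2)
  | 0 => [0]
  | 1 => [1]
  | n + 2 => fibWord (n + 1) ++ fibWord n

/-- The Fibonacci arrays f_{m,n} over {a,b,c,d} coded as Fin 2 × Fin 2,
with a=(0,0), b=(0,1), c=(1,0), d=(1,1); `fibArr m n i j` is the (i,j) entry
(0-indexed, only indices i < F m, j < F n are meaningful). -/
def fibArr : ℕ → ℕ → ℕ → ℕ → Fin 2 × Fin 2
  | 0, 0, _, _ => (0, 0)
  | 0, 1, _, _ => (0, 1)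
  | 1, 0, _, _ => (1, 0)
  | 1, 1, _, _ => (1, 1)
  | 0, n + 2, i, j =>
      if j < F (n + 1) then fibArr 0 (n + 1) i j else fibArr 0 n i (j - F (n + 1))
  | 1, n + 2, i, j =>
      if j < F (n + 1) then fibArr 1 (n + 1) i j else fibArr 1 n i (j - F (n + 1))
  | m + 2, k, i, j =>
      if i < F (m + 1) then fibArr (m + 1) k i j else fibArr m k (i - F (m + 1)) j
  termination_by m n => (m, n)

/-- The r × l subarray of u with top-left entry at (i,j). -/
def subarr (u : ℕ → ℕ → Fin 2 × Fin 2) (i j r l : ℕ) : Fin r × Fin l → Fin 2 × Fin 2 :=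
  fun p => u (i + p.1.val) (j + p.2.val)

/-- Number of square occurrences in a finite word. -/
noncomputable def sqOcc (w : List (Fin 2)) : ℕ :=
  {p : ℕ × ℕ | 1 ≤ p.2 ∧ p.1 + 2 * p.2 ≤ w.length ∧
    ∀ t < p.2, w.getD (p.1 + t) 0 = w.getD (p.1 + p.2 + t) 0}.ncard

/-- R(n): number of square occurrences in f_n. -/
noncomputable def R (n : ℕ) : ℕ := sqOcc (fibWord n)

def w2 : ℕ → ℕ → Fin 2
  | 0, _ => 0
  | 1, _ => 1
  | m + 2, i => if i < F (m + 1) then w2 (m + 1) i else w2 m (i - F (m + 1))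

lemma fibArr_eq (m n i j : ℕ) : fibArr m n i j = (w2 m i, w2 n j) := by
  induction m, n, i, j using fibArr.induct <;>
    (rw [fibArr]; simp [w2, *])

lemma fibWord_length (n : ℕ) : (fibWord n).length = F n := by
  induction n using fibWord.induct <;> simp [fibWord, F, *]

lemma w2_eq (m i : ℕ) (h : i < F m) : w2 m i = (fibWord m).getD i 0 := by
  induction m using fibWord.induct generalizing i with
  | case1 => rw [F] at h; interval_cases i; simp [w2, fibWord]
  | case2 => rw [F] at h; interval_cases i; simp [w2, fibWord]
  | case3 n ih1 ih2 =>
    rw [w2, fibWord]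
    split_ifs with hi
    · rw [List.getD_append _ _ _ _ (by rw [fibWord_length]; exact hi), ih1 i hi]
    · rw [List.getD_append_right, fibWord_length, ih2]
      · rw [F] at h; omega
      · rw [fibWord_length]; omega

lemma key (m n i j r l : ℕ) (hr : 1 ≤ r) (hl : 1 ≤ l) (hi : i + 2 * r ≤ F m) :
    subarr (fibArr m n) i j r l = subarr (fibArr m n) (i + r) j r l ↔
      ∀ t < r, (fibWord m).getD (i + t) 0 = (fibWord m).getD (i + r + t) 0 := by
  constructor
  · intro h t ht
    have := congrFun h (⟨t, ht⟩, ⟨0, hl⟩)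
    simp only [subarr, fibArr_eq, Prod.mk.injEq] at this
    rw [← w2_eq m (i + t) (by omega), ← w2_eq m (i + r + t) (by omega)]
    exact this.1
  · intro h
    funext p
    obtain ⟨⟨t, ht⟩, ⟨s, hs⟩⟩ := p
    simp only [subarr, fibArr_eq, Prod.mk.injEq]
    refine ⟨?_, trivial⟩
    rw [w2_eq m (i + t) (by omega), w2_eq m (i + r + t) (by omega)]
    exact h t ht

lemma card_B (N : ℕ) :
    {p : ℕ × ℕ | 1 ≤ p.2 ∧ p.1 + p.2 ≤ N}.ncard = N * (N + 1) / 2 := by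
  have hset : {p : ℕ × ℕ | 1 ≤ p.2 ∧ p.1 + p.2 ≤ N} =
      ↑((Finset.range N ×ˢ Finset.range (N + 1)).filter
        (fun p => 1 ≤ p.2 ∧ p.1 + p.2 ≤ N)) := by
    ext ⟨a, b⟩
    simp only [Set.mem_setOf_eq, Finset.coe_filter, Finset.mem_product, Finset.mem_range]
    constructor
    · rintro ⟨h1, h2⟩; exact ⟨⟨by omega, by omega⟩, h1, h2⟩
    · rintro ⟨_, h1, h2⟩; exact ⟨h1, h2⟩
  rw [hset, Set.ncard_coe_finset]
  rw [Finset.card_filter, Finset.sum_product]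
  have inner : ∀ a ∈ Finset.range N,
      (∑ b ∈ Finset.range (N + 1), if 1 ≤ b ∧ a + b ≤ N then 1 else 0) = N - a := by
    intro a ha
    rw [← Finset.card_filter]
    have : (Finset.range (N + 1)).filter (fun b => 1 ≤ b ∧ a + b ≤ N)
        = Finset.Icc 1 (N - a) := by
      ext b
      simp only [Finset.mem_filter, Finset.mem_range, Finset.mem_Icc]
      omega
    rw [this, Nat.card_Icc]; omega
  rw [Finset.sum_congr rfl inner]
  rw [← Finset.sum_range_reflect]
  have : ∀ a ∈ Finset.range N, N - (N - 1 - a) = a + 1 := by intro a ha; simp at ha; omega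
  rw [Finset.sum_congr rfl this]
  have : ∑ a ∈ Finset.range N, (a + 1) = ∑ a ∈ Finset.range (N + 1), a := by
    rw [Finset.sum_range_succ']; simp
  rw [this, Finset.sum_range_id]
  simp [Nat.mul_comm]

/-- For m ≥ 3 and n ≥ 1, the number of Type I(b) tandem occurrences in the
Fibonacci array f_{m,n} — tuples (i,j,r,l) with r,l ≥ 1, i+2r ≤ F(m), j+l ≤ F(n) such that
f_{m,n}[(i,j);(r,l)] = f_{m,n}[(i+r,j);(r,l)] — equals R(m)·F(n)(F(n)+1)/2. -/
theorem stmt3 (m n : ℕ) (hm : 3 ≤ m) (hn : 1 ≤ n) :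
    {t : ℕ × ℕ × ℕ × ℕ | 1 ≤ t.2.2.1 ∧ 1 ≤ t.2.2.2 ∧
      t.1 + 2 * t.2.2.1 ≤ F m ∧ t.2.1 + t.2.2.2 ≤ F n ∧
      subarr (fibArr m n) t.1 t.2.1 t.2.2.1 t.2.2.2
        = subarr (fibArr m n) (t.1 + t.2.2.1) t.2.1 t.2.2.1 t.2.2.2}.ncard
      = R m * (F n * (F n + 1) / 2) := by
  classical
  set A : Set (ℕ × ℕ) := {p : ℕ × ℕ | 1 ≤ p.2 ∧ p.1 + 2 * p.2 ≤ (fibWord m).length ∧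
    ∀ t < p.2, (fibWord m).getD (p.1 + t) 0 = (fibWord m).getD (p.1 + p.2 + t) 0} with hA
  set B : Set (ℕ × ℕ) := {p : ℕ × ℕ | 1 ≤ p.2 ∧ p.1 + p.2 ≤ F n} with hB
  have hinj : Function.Injective
      (fun q : (ℕ × ℕ) × (ℕ × ℕ) => (q.1.1, q.2.1, q.1.2, q.2.2) : _ → ℕ × ℕ × ℕ × ℕ) := by
    rintro ⟨⟨a, b⟩, ⟨c, d⟩⟩ ⟨⟨a', b'⟩, ⟨c', d'⟩⟩ h
    simp only [Prod.mk.injEq] at h ⊢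
    exact ⟨⟨h.1, h.2.2.1⟩, h.2.1, h.2.2.2⟩
  have hS : {t : ℕ × ℕ × ℕ × ℕ | 1 ≤ t.2.2.1 ∧ 1 ≤ t.2.2.2 ∧
      t.1 + 2 * t.2.2.1 ≤ F m ∧ t.2.1 + t.2.2.2 ≤ F n ∧
      subarr (fibArr m n) t.1 t.2.1 t.2.2.1 t.2.2.2
        = subarr (fibArr m n) (t.1 + t.2.2.1) t.2.1 t.2.2.1 t.2.2.2}
      = (fun q : (ℕ × ℕ) × (ℕ × ℕ) => (q.1.1, q.2.1, q.1.2, q.2.2)) '' (A ×ˢ B) := by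
    ext ⟨i, j, r, l⟩
    constructor
    · rintro ⟨hr, hl, hi, hj, heq⟩
      refine ⟨((i, r), (j, l)), ⟨⟨hr, ?_, ?_⟩, hl, hj⟩, rfl⟩
      · rw [fibWord_length]; exact hi
      · exact (key m n i j r l hr hl hi).mp heq
    · rintro ⟨⟨⟨a, b⟩, ⟨c, d⟩⟩, ⟨⟨h1, h2, h3⟩, h4, h5⟩, heq⟩
      obtain ⟨rfl, rfl, rfl, rfl⟩ : a = i ∧ c = j ∧ b = r ∧ d = l := by
        simpa [Prod.mk.injEq] using heq
      rw [fibWord_length] at h2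
      exact ⟨h1, h4, h2, h5, (key m n a c b d h1 h4 h2).mpr h3⟩
  rw [hS, Set.ncard_image_of_injective _ hinj]
  have hprod : (A ×ˢ B).ncard = A.ncard * B.ncard := by
    rw [← Nat.card_coe_set_eq, ← Nat.card_coe_set_eq, ← Nat.card_coe_set_eq,
      Nat.card_congr (Equiv.Set.prod A B), Nat.card_prod]
  rw [hprod, card_B (F n)]
  rfl
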